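/- Let A be an m×n real matrix and b ∈ ℝᵐ with X = {x ∈ ℝⁿ : A x ≤ b} nonempty. Let Ā = [A | −b], K = { Āᵀ u : u ∈ ℝᵐ, u ≥ 0 } ⊆ ℝⁿ⁺¹, ē = (0,…,0,1) ∈ ℝⁿ⁺¹, z⋆ = P_K(ē) the metric projection of ē onto K, and γ = ‖z⋆ − ē‖. Then γ > 0, the last coordinate of (ē − z⋆)/γ² equals 1, and the first n coordinates of (ē − z⋆)/γ² form the unique least-norm point x⋆ of X; that is, (ē − z⋆)/γ² = (x⋆, 1). -/

import Mathlib

open scoped RealInnerProductSpace Matrix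

set_option maxHeartbeats 1000000 in
/-- With `X = {x : A x ≤ b}` nonempty, `Ā = [A | −b]`,
`K = {Āᵀu : u ≥ 0}`, `ē = (0,…,0,1)`, `z⋆ = P_K(ē)` (the metric projection of `ē` onto
`K`, characterized as the distance minimizer) and `γ = ‖z⋆ − ē‖`: one has `γ > 0` and
`(ē − z⋆)/γ² = (x⋆, 1)`, where `x⋆` is the unique least-norm point of `X`. -/
theorem cone_projection_recovers_least_norm_point
    (m n : ℕ) (A : Matrix (Fin m) (Fin n) ℝ) (b : Fin m → ℝ)
    (X : Set (EuclideanSpace ℝ (Fin n)))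
    (hX : X = {x : EuclideanSpace ℝ (Fin n) | A.mulVec x ≤ b})
    (hXne : X.Nonempty)
    (Abar : Matrix (Fin m) (Fin (n + 1)) ℝ)
    (hAbar : Abar = Matrix.of fun i => Fin.snoc (A i) (-(b i)))
    (K : Set (EuclideanSpace ℝ (Fin (n + 1))))
    (hK : K = {z : EuclideanSpace ℝ (Fin (n + 1)) | ∃ u : Fin m → ℝ, 0 ≤ u ∧
        z = (WithLp.equiv 2 (Fin (n + 1) → ℝ)).symm (Abar.transpose.mulVec u)})
    (ebar : EuclideanSpace ℝ (Fin (n + 1)))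
    (hebar : ebar = EuclideanSpace.single (Fin.last n) 1)
    (zstar : EuclideanSpace ℝ (Fin (n + 1)))
    (hzstar : zstar ∈ K ∧ ∀ z ∈ K, dist ebar zstar ≤ dist ebar z)
    (γ : ℝ) (hγ : γ = ‖zstar - ebar‖) :
    0 < γ ∧
      ∃ xstar : EuclideanSpace ℝ (Fin n),
        (xstar ∈ X ∧ ∀ y ∈ X, ‖xstar‖ ≤ ‖y‖) ∧
        (γ ^ 2)⁻¹ • (ebar - zstar) =
          (WithLp.equiv 2 (Fin (n + 1) → ℝ)).symm (Fin.snoc xstar 1) := by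
  obtain ⟨hzK, hzmin⟩ := hzstar
  -- inner product as dot product
  have hinner : ∀ N : ℕ, ∀ x y : EuclideanSpace ℝ (Fin N),
      ⟪x, y⟫ = (fun j => x j) ⬝ᵥ (fun j => y j) := by
    intro N x y
    simp [PiLp.inner_apply, RCLike.inner_apply, dotProduct, mul_comm]
  -- dot product transfer
  have hdot : ∀ (v : Fin (n+1) → ℝ) (u : Fin m → ℝ),
      v ⬝ᵥ Abar.transpose.mulVec u = (Abar.mulVec v) ⬝ᵥ u := by
    intro v u
    rw [Matrix.dotProduct_mulVec, Matrix.vecMul_transpose]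
  -- Abar applied to snoc vectors
  have hAbarSnoc : ∀ (y : Fin n → ℝ) (c : ℝ),
      Abar.mulVec (Fin.snoc y c) = fun i => A.mulVec y i - c * b i := by
    intro y c
    funext i
    simp only [hAbar, Matrix.mulVec, dotProduct, Matrix.of_apply]
    rw [Fin.sum_univ_castSucc]
    simp [Fin.snoc_castSucc, Fin.snoc_last, Matrix.mulVec, dotProduct]
    ring
  -- nonpos dot nonneg
  have hdotle : ∀ (p : Fin m → ℝ) (u : Fin m → ℝ), p ≤ 0 → 0 ≤ u → p ⬝ᵥ u ≤ 0 := by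
    intro p u hp hu
    apply Finset.sum_nonpos
    intro i _
    exact mul_nonpos_of_nonpos_of_nonneg (hp i) (hu i)
  -- K is convex
  have hKconv : Convex ℝ K := by
    rw [hK]
    rintro z1 ⟨u1, hu1, rfl⟩ z2 ⟨u2, hu2, rfl⟩ a c ha hc hac
    refine ⟨a • u1 + c • u2, ?_, ?_⟩
    · intro i
      simpa using add_nonneg (mul_nonneg ha (hu1 i)) (mul_nonneg hc (hu2 i))
    · simp [Matrix.mulVec_add, Matrix.mulVec_smul, WithLp.toLp_add, WithLp.equiv_symm_apply,
        WithLp.toLp_smul]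
  -- variational inequality
  have hvar : ∀ z ∈ K, ⟪ebar - zstar, z - zstar⟫ ≤ 0 := by
    haveI : Nonempty K := ⟨⟨zstar, hzK⟩⟩
    have hbdd : BddBelow (Set.range fun w : K => ‖ebar - (w : EuclideanSpace ℝ (Fin (n+1)))‖) := by
      refine ⟨0, ?_⟩
      rintro x ⟨w, rfl⟩
      exact norm_nonneg _
    have heq : ‖ebar - zstar‖ = ⨅ w : K, ‖ebar - (w : EuclideanSpace ℝ (Fin (n+1)))‖ := by
      apply le_antisymm
      · apply le_ciInf
        intro w
        simpa [dist_eq_norm] using hzmin w w.2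
      · exact ciInf_le hbdd ⟨zstar, hzK⟩
    exact (norm_eq_iInf_iff_real_inner_le_zero hKconv hzK).mp heq
  -- cone facts
  have hzero : (0 : EuclideanSpace ℝ (Fin (n+1))) ∈ K := by
    rw [hK]
    exact ⟨0, le_refl _, by simp⟩
  have htwo : (2 : ℝ) • zstar ∈ K := by
    rw [hK] at hzK ⊢
    obtain ⟨u, hu, hz⟩ := hzK
    refine ⟨(2:ℝ) • u, fun i => by
      have : (0:ℝ) ≤ 2 * u i := mul_nonneg (by norm_num) (hu i)
      simpa using this, ?_⟩
    rw [hz]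
    simp [Matrix.mulVec_smul, WithLp.toLp_smul, WithLp.equiv_symm_apply]
  have hwz : ⟪ebar - zstar, zstar⟫ = 0 := by
    have h1 := hvar 0 hzero
    have h2 := hvar ((2:ℝ) • zstar) htwo
    rw [zero_sub, inner_neg_right] at h1
    have h2' : ⟪ebar - zstar, (2:ℝ) • zstar - zstar⟫ = ⟪ebar - zstar, zstar⟫ := by
      congr 1
      module
    rw [h2'] at h2
    linarith
  have hwle : ∀ z ∈ K, ⟪ebar - zstar, z⟫ ≤ 0 := by
    intro z hz
    have := hvar z hz
    rw [inner_sub_right, hwz] at this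
    linarith
  -- coordinates of w
  set wv : Fin (n+1) → ℝ := fun j => (ebar - zstar) j with hwv
  have hwvsub : ∀ j, wv j = ebar j - zstar j := fun j => rfl
  -- gamma squared facts
  have hγnn : 0 ≤ γ := hγ ▸ norm_nonneg _
  have hnormw : ‖ebar - zstar‖ = γ := by rw [hγ, norm_sub_rev]
  have hebarco : ∀ j, ebar j = if j = Fin.last n then 1 else 0 := by
    intro j
    rw [hebar]
    simp [EuclideanSpace.single_apply]
  have hsnocdot : ∀ v : Fin n → ℝ,
      ((Fin.snoc v 1 : Fin (n+1) → ℝ) ⬝ᵥ fun j => ebar j) = 1 := by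
    intro v
    simp only [dotProduct]
    have hterm : ∀ j, (Fin.snoc v (1:ℝ) : Fin (n+1) → ℝ) j * ebar j
        = if j = Fin.last n then (Fin.snoc v (1:ℝ) : Fin (n+1) → ℝ) j else 0 := by
      intro j
      rw [hebarco]
      split <;> simp
    rw [Finset.sum_congr rfl fun j _ => hterm j]
    simp
  have hsumw : ∑ j, wv j * wv j = γ ^ 2 := by
    have h := real_inner_self_eq_norm_sq (ebar - zstar)
    rw [hinner, hnormw] at h
    rw [← h]
    rfl
  have hwlast : wv (Fin.last n) = γ ^ 2 := by
    have h1 : ⟪ebar - zstar, ebar⟫ = γ ^ 2 := by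
      have : ⟪ebar - zstar, ebar - zstar⟫ + ⟪ebar - zstar, zstar⟫ = γ ^ 2 := by
        rw [hwz, real_inner_self_eq_norm_sq, hnormw]; ring
      rw [← this, ← inner_add_right]
      congr 1
      module
    rw [hinner] at h1
    rw [← h1]
    show _ = ∑ j, wv j * ebar j
    have : ∀ j, wv j * ebar j = if j = Fin.last n then wv j else 0 := by
      intro j
      rw [hebarco]
      split <;> simp
    rw [Finset.sum_congr rfl fun j _ => this j]
    simp
  -- Abar.mulVec wv ≤ 0
  have hAw : ∀ i, Abar.mulVec wv i ≤ 0 := by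
    intro i
    have hu : (0 : Fin m → ℝ) ≤ Pi.single i 1 := by
      intro k
      by_cases h : k = i <;> simp [Pi.single_apply, h]
    have hmem : (WithLp.equiv 2 (Fin (n+1) → ℝ)).symm (Abar.transpose.mulVec (Pi.single i 1)) ∈ K := by
      rw [hK]; exact ⟨Pi.single i 1, hu, rfl⟩
    have := hwle _ hmem
    rw [hinner] at this
    have heq : (fun j => (ebar - zstar) j) ⬝ᵥ
        (fun j => (WithLp.equiv 2 (Fin (n+1) → ℝ)).symm (Abar.transpose.mulVec (Pi.single i 1)) j)
        = (Abar.mulVec wv) ⬝ᵥ Pi.single i 1 := by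
      rw [← hdot]; rfl
    rw [heq] at this
    simpa [dotProduct_single] using this
  -- positivity of gamma
  have hγpos : 0 < γ := by
    rcases lt_or_eq_of_le hγnn with h | h
    · exact h
    · exfalso
      have hze : zstar = ebar := by
        have : ‖zstar - ebar‖ = 0 := by rw [← hγ, ← h]
        have := norm_eq_zero.mp this
        linear_combination (norm := module) this
      obtain ⟨x0, hx0⟩ := hXne
      rw [hX] at hx0
      rw [hK, hze] at hzK
      obtain ⟨u, hu, hebar_eq⟩ := hzK
      have h1 : (Fin.snoc (fun j => x0 j) 1 : Fin (n+1) → ℝ) ⬝ᵥ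
          Abar.transpose.mulVec u ≤ 0 := by
        rw [hdot, hAbarSnoc]
        apply hdotle _ _ _ hu
        intro i
        simpa using sub_nonpos.mpr (hx0 i)
      have h2 := hsnocdot (fun t => x0 t)
      have h3 : (fun j => ebar j) = Abar.transpose.mulVec u := by
        funext j
        rw [hebar_eq]
        rfl
      rw [h3] at h2
      linarith
  have hγ2pos : 0 < γ ^ 2 := by positivity
  -- define xstar
  set xstar : EuclideanSpace ℝ (Fin n) :=
    (WithLp.equiv 2 (Fin n → ℝ)).symm (fun j => (γ ^ 2)⁻¹ * wv j.castSucc) with hxstar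
  have hxco : ∀ j, xstar j = (γ ^ 2)⁻¹ * wv j.castSucc := fun j => rfl
  -- membership
  have hrowsum : ∀ i, ∑ j, A i j * wv j.castSucc ≤ b i * γ ^ 2 := by
    intro i
    have := hAw i
    simp only [hAbar, Matrix.mulVec, dotProduct, Matrix.of_apply] at this
    rw [Fin.sum_univ_castSucc] at this
    simp only [Fin.snoc_castSucc, Fin.snoc_last, hwlast] at this
    linarith
  have hxmem : xstar ∈ X := by
    rw [hX]
    intro i
    have : A.mulVec xstar i = (γ ^ 2)⁻¹ * ∑ j, A i j * wv j.castSucc := by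
      simp only [Matrix.mulVec, dotProduct, hxco, Finset.mul_sum]
      congr 1; funext j; ring
    rw [this]
    calc (γ ^ 2)⁻¹ * ∑ j, A i j * wv j.castSucc
        ≤ (γ ^ 2)⁻¹ * (b i * γ ^ 2) := by
          apply mul_le_mul_of_nonneg_left (hrowsum i) (le_of_lt (inv_pos.mpr hγ2pos))
      _ = b i := by field_simp
  -- norm of xstar
  have hsumsplit : ∑ j : Fin n, wv j.castSucc * wv j.castSucc = γ ^ 2 - γ ^ 2 * γ ^ 2 := by
    have := hsumw
    rw [Fin.sum_univ_castSucc, hwlast] at this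
    linarith
  have hnormx : ‖xstar‖ ^ 2 = (γ ^ 2)⁻¹ - 1 := by
    rw [← real_inner_self_eq_norm_sq, hinner]
    simp only [dotProduct, hxco]
    have : ∑ j : Fin n, ((γ ^ 2)⁻¹ * wv j.castSucc) * ((γ ^ 2)⁻¹ * wv j.castSucc)
        = (γ ^ 2)⁻¹ * (γ ^ 2)⁻¹ * ∑ j : Fin n, wv j.castSucc * wv j.castSucc := by
      rw [Finset.mul_sum]; congr 1; funext j; ring
    rw [this, hsumsplit]
    field_simp
  -- least norm property
  have hleast : ∀ y ∈ X, ‖xstar‖ ≤ ‖y‖ := by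
    intro y hy
    rw [hX] at hy
    -- snoc y 1 dot zstar ≤ 0
    obtain ⟨u, hu, hzeq⟩ := hK ▸ hzK
    have hz1 : (Fin.snoc (fun j => y j) 1 : Fin (n+1) → ℝ) ⬝ᵥ (fun j => zstar j) ≤ 0 := by
      have hzv : (fun j => zstar j) = Abar.transpose.mulVec u := by
        funext j; rw [hzeq]; rfl
      rw [hzv, hdot, hAbarSnoc]
      apply hdotle _ _ _ hu
      intro i
      simpa using sub_nonpos.mpr (hy i)
    have he1 := hsnocdot (fun t => y t)
    have hw1 : (1:ℝ) ≤ (Fin.snoc (fun j => y j) 1 : Fin (n+1) → ℝ) ⬝ᵥ wv := by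
      have : (Fin.snoc (fun j => y j) 1 : Fin (n+1) → ℝ) ⬝ᵥ wv
          = (Fin.snoc (fun j => y j) 1 : Fin (n+1) → ℝ) ⬝ᵥ (fun j => ebar j)
            - (Fin.snoc (fun j => y j) 1 : Fin (n+1) → ℝ) ⬝ᵥ (fun j => zstar j) := by
        simp only [dotProduct, hwvsub, ← Finset.sum_sub_distrib]
        congr 1; funext j; ring
      rw [this, he1]
      linarith
    have hexp : (Fin.snoc (fun j => y j) 1 : Fin (n+1) → ℝ) ⬝ᵥ wv
        = (∑ j : Fin n, y j * wv j.castSucc) + γ ^ 2 := by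
      simp only [dotProduct]
      rw [Fin.sum_univ_castSucc]
      simp [Fin.snoc_castSucc, Fin.snoc_last, hwlast]
    have hinx : ⟪y, xstar⟫ = (γ ^ 2)⁻¹ * ∑ j : Fin n, y j * wv j.castSucc := by
      rw [hinner]
      simp only [dotProduct, hxco, Finset.mul_sum]
      congr 1; funext j; ring
    have hlow : ‖xstar‖ ^ 2 ≤ ⟪y, xstar⟫ := by
      rw [hnormx, hinx]
      rw [hexp] at hw1
      have h4 : (1:ℝ) - γ ^ 2 ≤ ∑ j : Fin n, y j * wv j.castSucc := by linarith
      calc (γ ^ 2)⁻¹ - 1 = (γ ^ 2)⁻¹ * (1 - γ ^ 2) := by field_simp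
        _ ≤ (γ ^ 2)⁻¹ * ∑ j : Fin n, y j * wv j.castSucc :=
          mul_le_mul_of_nonneg_left h4 (le_of_lt (inv_pos.mpr hγ2pos))
    have hcs : ⟪y, xstar⟫ ≤ ‖y‖ * ‖xstar‖ := real_inner_le_norm y xstar
    rcases eq_or_lt_of_le (norm_nonneg xstar) with h0 | h0
    · rw [← h0]; exact norm_nonneg y
    · have : ‖xstar‖ * ‖xstar‖ ≤ ‖y‖ * ‖xstar‖ := by
        nlinarith
      exact le_of_mul_le_mul_right this h0
  refine ⟨hγpos, xstar, ⟨hxmem, hleast⟩, ?_⟩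
  -- final equality
  ext j
  simp only [PiLp.smul_apply, PiLp.sub_apply, smul_eq_mul, WithLp.equiv_symm_apply, PiLp.toLp_apply]
  induction j using Fin.lastCases with
  | last =>
    have hl := hwlast
    rw [hwvsub] at hl
    rw [hl, Fin.snoc_last]
    field_simp
  | cast k =>
    rw [Fin.snoc_castSucc, hxco, hwvsub]
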